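/- Let λ be a positive random variable with E[λ^{1−η}] finite, ε ~ N(0, σ²) independent of λ, λ̂ = λ·e^ε, price p = M·λ̂ with M > 0, and conversion c(p) = K·p^{−η} with K, η > 0. Then E[λ·c(p)] / E[p·c(p)] = (1/M)·exp(σ²(2η−1)/2). -/

import Mathlib

open MeasureTheory ProbabilityTheory

lemma gaussian_pdf_mul_exp (v : NNReal) (hv : v ≠ 0) (t x : ℝ) :
    gaussianPDFReal 0 v x * Real.exp (t * x)
      = Real.exp ((v : ℝ) * t ^ 2 / 2) * gaussianPDFReal ((v : ℝ) * t) v x := by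
  have hv' : (v : ℝ) ≠ 0 := by exact_mod_cast hv
  simp only [gaussianPDFReal]
  rw [mul_assoc, ← Real.exp_add, mul_left_comm, ← Real.exp_add]
  congr 1
  field_simp
  ring

lemma gaussian_mgf_aux (v : NNReal) (t : ℝ) :
    Integrable (fun x => Real.exp (t * x)) (gaussianReal 0 v) ∧
      ∫ x, Real.exp (t * x) ∂(gaussianReal 0 v) = Real.exp ((v : ℝ) * t ^ 2 / 2) := by
  rcases eq_or_ne v 0 with hv | hv
  · subst hv
    rw [gaussianReal_zero_var]
    have hae : (fun x => Real.exp (t * x)) =ᵐ[Measure.dirac (0:ℝ)]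
        fun _ => Real.exp (t * 0) := by
      rw [Filter.EventuallyEq, ae_dirac_eq]; rfl
    constructor
    · exact (integrable_const _).congr hae.symm
    · rw [integral_dirac]; simp
  · have hpdf_meas : Measurable fun x => (gaussianPDFReal 0 v x).toNNReal :=
      (measurable_gaussianPDFReal 0 v).real_toNNReal
    have hwd : gaussianReal 0 v
        = volume.withDensity fun x => ((gaussianPDFReal 0 v x).toNNReal : ENNReal) := by
      rw [gaussianReal_of_var_ne_zero 0 hv]; rfl
    have hkey : (fun x => (gaussianPDFReal 0 v x).toNNReal • Real.exp (t * x))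
        = fun x => Real.exp ((v : ℝ) * t ^ 2 / 2) * gaussianPDFReal ((v : ℝ) * t) v x := by
      ext x
      rw [NNReal.smul_def, Real.coe_toNNReal _ (gaussianPDFReal_nonneg 0 v x)]
      exact gaussian_pdf_mul_exp v hv t x
    constructor
    · rw [hwd]
      refine (integrable_withDensity_iff_integrable_smul (E := ℝ) hpdf_meas (g := fun x => Real.exp (t * x))).mpr ?_
      rw [hkey]
      exact (integrable_gaussianPDFReal _ v).const_mul _
    · rw [hwd, integral_withDensity_eq_integral_smul hpdf_meas, hkey, integral_const_mul,
        integral_gaussianPDFReal_eq_one _ hv, mul_one]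


/-- Under lognormal multiplicative error, cost-plus pricing `p = M·λ̂` and power-law demand
`c(p) = K·p^{−η}`, the expected loss ratio numerator/denominator satisfies
`E[λ·c(p)] / E[p·c(p)] = (1/M)·exp(σ²(2η−1)/2)`. -/
theorem loss_ratio_exp_formula
    {Ω : Type*} [MeasurableSpace Ω] (μ : Measure Ω) [IsProbabilityMeasure μ]
    (lam ε : Ω → ℝ) (v : NNReal) (M K η : ℝ)
    (hM : 0 < M) (hK : 0 < K) (hη : 0 < η)
    (hlam_meas : Measurable lam) (hε_meas : Measurable ε)
    (hlam_pos : ∀ᵐ ω ∂μ, 0 < lam ω)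
    (hmom : Integrable (fun ω => lam ω ^ (1 - η)) μ)
    (hmom_pos : 0 < ∫ ω, lam ω ^ (1 - η) ∂μ)
    (hε_law : Measure.map ε μ = gaussianReal 0 v)
    (hindep : IndepFun lam ε μ)
    (lamHat p : Ω → ℝ)
    (hlamHat : lamHat = fun ω => lam ω * Real.exp (ε ω))
    (hp : p = fun ω => M * lamHat ω) :
    (∫ ω, lam ω * (K * p ω ^ (-η)) ∂μ) / (∫ ω, p ω * (K * p ω ^ (-η)) ∂μ)
      = (1 / M) * Real.exp ((v : ℝ) * (2 * η - 1) / 2) := by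
  subst hp hlamHat
  set A : ℝ := ∫ ω, lam ω ^ (1 - η) ∂μ with hA
  -- mgf of ε
  have hεmgf : ∀ t : ℝ, Integrable (fun ω => Real.exp (t * ε ω)) μ ∧
      ∫ ω, Real.exp (t * ε ω) ∂μ = Real.exp ((v : ℝ) * t ^ 2 / 2) := by
    intro t
    obtain ⟨hint, hval⟩ := gaussian_mgf_aux v t
    rw [← hε_law] at hint hval
    have hsm : AEStronglyMeasurable (fun x => Real.exp (t * x)) (Measure.map ε μ) :=
      (Real.continuous_exp.comp (continuous_const.mul continuous_id)).aestronglyMeasurable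
    constructor
    · exact (integrable_map_measure hsm hε_meas.aemeasurable).mp hint
    · rw [← integral_map hε_meas.aemeasurable hsm]; exact hval
  -- product moments
  have hprod : ∀ t : ℝ, Integrable (fun ω => lam ω ^ (1 - η) * Real.exp (t * ε ω)) μ ∧
      ∫ ω, lam ω ^ (1 - η) * Real.exp (t * ε ω) ∂μ = A * Real.exp ((v : ℝ) * t ^ 2 / 2) := by
    intro t
    obtain ⟨hint, hval⟩ := hεmgf t
    have hind : IndepFun (fun ω => lam ω ^ (1 - η)) (fun ω => Real.exp (t * ε ω)) μ := by
      exact hindep.comp (measurable_id.pow_const (1 - η))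
        (Real.continuous_exp.comp (continuous_const.mul continuous_id)).measurable
    constructor
    · exact hind.integrable_mul hmom hint
    · rw [← hval]
      exact hind.integral_fun_mul_eq_mul_integral hmom.aestronglyMeasurable hint.aestronglyMeasurable
  -- pointwise rewriting of the numerator
  have hnum : (fun ω => lam ω * (K * (M * (lam ω * Real.exp (ε ω))) ^ (-η)))
      =ᵐ[μ] fun ω => (K * M ^ (-η)) * (lam ω ^ (1 - η) * Real.exp ((-η) * ε ω)) := by
    filter_upwards [hlam_pos] with ω hω
    rw [Real.mul_rpow hM.le (by positivity), Real.mul_rpow hω.le (Real.exp_pos _).le,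
      ← Real.exp_mul, mul_comm (ε ω) (-η)]
    have h3 : lam ω * lam ω ^ (-η) = lam ω ^ (1 - η) := by
      rw [show (1 : ℝ) - η = 1 + -η by ring, Real.rpow_add hω, Real.rpow_one]
    rw [← h3]; ring
  -- pointwise rewriting of the denominator
  have hden : (fun ω => (M * (lam ω * Real.exp (ε ω))) * (K * (M * (lam ω * Real.exp (ε ω))) ^ (-η)))
      =ᵐ[μ] fun ω => (K * M ^ (1 - η)) * (lam ω ^ (1 - η) * Real.exp ((1 - η) * ε ω)) := by
    filter_upwards [hlam_pos] with ω hω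
    have hppos : 0 < M * (lam ω * Real.exp (ε ω)) := by positivity
    have h4 : (M * (lam ω * Real.exp (ε ω))) * (M * (lam ω * Real.exp (ε ω))) ^ (-η)
        = (M * (lam ω * Real.exp (ε ω))) ^ (1 - η) := by
      rw [show (1 : ℝ) - η = 1 + -η by ring, Real.rpow_add hppos, Real.rpow_one]
    have h5 : (M * (lam ω * Real.exp (ε ω))) ^ (1 - η)
        = M ^ (1 - η) * (lam ω ^ (1 - η) * Real.exp ((1 - η) * ε ω)) := by
      rw [Real.mul_rpow hM.le (by positivity), Real.mul_rpow hω.le (Real.exp_pos _).le,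
        ← Real.exp_mul, mul_comm (ε ω) (1 - η)]
    have h6 : M * (lam ω * Real.exp (ε ω)) * (K * (M * (lam ω * Real.exp (ε ω))) ^ (-η))
        = K * ((M * (lam ω * Real.exp (ε ω))) * (M * (lam ω * Real.exp (ε ω))) ^ (-η)) := by
      ring
    rw [h6, h4, h5]; ring
  rw [integral_congr_ae hnum, integral_congr_ae hden, integral_const_mul, integral_const_mul,
    (hprod (-η)).2, (hprod (1 - η)).2]
  have hApos : 0 < A := hmom_pos
  have hden_ne : K * M ^ (1 - η) * (A * Real.exp ((v : ℝ) * (1 - η) ^ 2 / 2)) ≠ 0 := by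
    positivity
  rw [div_eq_iff hden_ne]
  have e1 : M ^ (-η : ℝ) = 1 / M * M ^ (1 - η) := by
    rw [one_div, ← Real.rpow_neg_one M, ← Real.rpow_add hM]
    congr 1; ring
  have e2 : Real.exp ((v : ℝ) * (-η) ^ 2 / 2)
      = Real.exp ((v : ℝ) * (2 * η - 1) / 2) * Real.exp ((v : ℝ) * (1 - η) ^ 2 / 2) := by
    rw [← Real.exp_add]; congr 1; ring
  rw [e1, e2]; ring
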